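/- arXiv:1604.06003 — 3 statements merged into one kernel-verified Lean document; each statement's English description precedes it below -/
import Mathlib

section
/- Let C' ⊆ ℝ^d be a compact convex set and let C be a compact set contained in the interior of C'. Suppose f₀, f₁, f₂, … : C' → ℝ are convex functions that are uniformly bounded (there is B > 0 with |f_n(x)| ≤ B for all n ≥ 0 and x ∈ C') and uniformly Lipschitz (there is M > 0 with |f_n(x) − f_n(y)| ≤ M‖x − y‖ for all n ≥ 0 and x, y ∈ C'). If ∫_{C'} (f_n(x) − f₀(x))² dx → 0 as n → ∞ (Lebesgue integral), then sup_{x ∈ C} |f_n(x) − f₀(x)| → 0 as n → ∞. -/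
open MeasureTheory Filter Metric

/-- Lemma B.3: L² convergence of uniformly bounded, uniformly Lipschitz convex functions
implies uniform convergence on compact subsets of the interior. -/
theorem sckls_L2_to_uniform_convergence
    {d : ℕ} (C' C : Set (EuclideanSpace ℝ (Fin d)))
    (hC'comp : IsCompact C') (hC'conv : Convex ℝ C')
    (hCcomp : IsCompact C) (hCsub : C ⊆ interior C')
    (f : ℕ → EuclideanSpace ℝ (Fin d) → ℝ)
    (hconv : ∀ n, ConvexOn ℝ C' (f n))
    (B : ℝ) (hB : 0 < B) (hbound : ∀ n, ∀ x ∈ C', |f n x| ≤ B)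
    (M : ℝ) (hM : 0 < M)
    (hlip : ∀ n, ∀ x ∈ C', ∀ y ∈ C', |f n x - f n y| ≤ M * ‖x - y‖)
    (hL2 : Tendsto (fun n => ∫ x in C', (f n x - f 0 x) ^ 2) atTop (nhds 0)) :
    Tendsto (fun n => ⨆ x ∈ C, |f n x - f 0 x|) atTop (nhds 0) := by
  have hcont : ∀ n, ContinuousOn (f n) C' := by
    intro n
    refine (LipschitzOnWith.of_dist_le_mul (K := M.toNNReal) ?_).continuousOn
    intro x hx y hy
    rw [Real.coe_toNNReal _ hM.le]
    simpa [Real.dist_eq, dist_eq_norm] using hlip n x hx y hy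
  have hint : ∀ n, IntegrableOn (fun x => (f n x - f 0 x) ^ 2) C' volume :=
    fun n => (((hcont n).sub (hcont 0)).pow 2).integrableOn_compact hC'comp
  obtain ⟨ρ, hρ, hρsub⟩ := hCcomp.exists_thickening_subset_open isOpen_interior hCsub
  rw [Metric.tendsto_atTop] at hL2 ⊢
  intro ε hε
  set r : ℝ := min ρ (ε / (8 * M)) with hrdef
  have hr0 : 0 < r := lt_min hρ (by positivity)
  set v : ℝ := (volume (ball (0 : EuclideanSpace ℝ (Fin d)) r)).toReal with hv
  have hv0 : 0 < v := by
    rw [hv]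
    exact ENNReal.toReal_pos (measure_ball_pos volume 0 hr0).ne' measure_ball_lt_top.ne
  obtain ⟨N, hN⟩ := hL2 ((ε / 4) ^ 2 * v) (by positivity)
  refine ⟨N, fun n hn => ?_⟩
  have hIn := hN n hn
  rw [Real.dist_eq, sub_zero] at hIn ⊢
  have hInt_lt : ∫ x in C', (f n x - f 0 x) ^ 2 < (ε / 4) ^ 2 * v :=
    (le_abs_self _).trans_lt hIn
  -- pointwise bound on C
  have key : ∀ x₀ ∈ C, |f n x₀ - f 0 x₀| ≤ ε / 2 := by
    intro x₀ hx₀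
    by_contra hcon
    push_neg at hcon
    have hball : ball x₀ r ⊆ C' := by
      intro y hy
      have h1 : y ∈ ball x₀ ρ := ball_subset_ball (min_le_left _ _) hy
      have h2 : y ∈ thickening ρ C := ball_subset_thickening hx₀ ρ h1
      exact interior_subset (hρsub h2)
    have hx₀C' : x₀ ∈ C' := hball (mem_ball_self hr0)
    have hlow : ∀ y ∈ ball x₀ r, (ε / 4) ^ 2 ≤ (f n y - f 0 y) ^ 2 := by
      intro y hy
      have hyC' : y ∈ C' := hball hy
      have h1 : |f n x₀ - f n y| ≤ M * ‖x₀ - y‖ := hlip n x₀ hx₀C' y hyC'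
      have h2 : |f 0 x₀ - f 0 y| ≤ M * ‖x₀ - y‖ := hlip 0 x₀ hx₀C' y hyC'
      have hnorm : ‖x₀ - y‖ < r := by
        rw [← dist_eq_norm, dist_comm]; exact mem_ball.mp hy
      have hrε : r ≤ ε / (8 * M) := min_le_right _ _
      have hMr : M * ‖x₀ - y‖ ≤ ε / 8 := by
        have : M * ‖x₀ - y‖ ≤ M * (ε / (8 * M)) :=
          mul_le_mul_of_nonneg_left (le_of_lt (hnorm.trans_le hrε)) hM.le
        calc M * ‖x₀ - y‖ ≤ M * (ε / (8 * M)) := this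
          _ = ε / 8 := by field_simp
      have h3 : |(f n x₀ - f 0 x₀) - (f n y - f 0 y)| ≤ ε / 8 + ε / 8 := by
        calc |(f n x₀ - f 0 x₀) - (f n y - f 0 y)|
            = |(f n x₀ - f n y) + -(f 0 x₀ - f 0 y)| := by ring_nf
          _ ≤ |f n x₀ - f n y| + |-(f 0 x₀ - f 0 y)| := abs_add_le _ _
          _ = |f n x₀ - f n y| + |f 0 x₀ - f 0 y| := by rw [abs_neg]
          _ ≤ ε / 8 + ε / 8 := add_le_add (h1.trans hMr) (h2.trans hMr)
      have h4 := abs_sub_abs_le_abs_sub (f n x₀ - f 0 x₀) (f n y - f 0 y)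
      have h5 : ε / 4 ≤ |f n y - f 0 y| := by linarith
      calc (ε / 4) ^ 2 ≤ |f n y - f 0 y| ^ 2 := by
            apply pow_le_pow_left₀ (by positivity) h5
        _ = (f n y - f 0 y) ^ 2 := sq_abs _
    have hmono : ∫ x in ball x₀ r, (f n x - f 0 x) ^ 2 ≤ ∫ x in C', (f n x - f 0 x) ^ 2 :=
      setIntegral_mono_set (hint n) (ae_of_all _ fun x => sq_nonneg _)
        (HasSubset.Subset.eventuallyLE hball)
    have hge : (ε / 4) ^ 2 * (volume (ball x₀ r)).toReal
        ≤ ∫ x in ball x₀ r, (f n x - f 0 x) ^ 2 :=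
      by have := setIntegral_ge_of_const_le measurableSet_ball measure_ball_lt_top.ne hlow
           ((hint n).mono_set hball)
         rw [smul_eq_mul, mul_comm] at this; exact this
    have hcenter : (volume (ball x₀ r)).toReal = v := by
      rw [hv, Measure.addHaar_ball_center]
    rw [hcenter] at hge
    linarith
  have hsup_nonneg : 0 ≤ ⨆ x ∈ C, |f n x - f 0 x| :=
    Real.iSup_nonneg fun x => Real.iSup_nonneg fun _ => abs_nonneg _
  have hsup_le : (⨆ x ∈ C, |f n x - f 0 x|) ≤ ε / 2 :=
    Real.iSup_le (fun x => Real.iSup_le (fun hx => key x hx) (by linarith)) (by linarith)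
  rw [abs_of_nonneg hsup_nonneg]
  linarith
end

section
/- Let C' ⊆ ℝ^d, let f, f₀ : C' → ℝ be M-Lipschitz functions (M > 0), and suppose |f(x*) − f₀(x*)| ≥ ε for some x* ∈ C' and ε > 0. Let q : C' → ℝ satisfy q(x) ≥ q_min for all x ∈ C', where q_min > 0. If r ≤ ε/(4M) and the closed Euclidean ball B_r(x*) of radius r centered at x* is contained in C', then ∫_{C'} (f(x) − f₀(x))² q(x) dx ≥ (ε²/4) · q_min · vol(B_r(x*)), where vol denotes Lebesgue measure of the ball. -/
open MeasureTheory

/-- A pointwise sup-norm discrepancy between M-Lipschitz functions forces a lower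
bound on the weighted L² distance (Lebesgue integral). -/
theorem lipschitz_discrepancy_weighted_L2_lower_bound
    {d : ℕ} (C' : Set (EuclideanSpace ℝ (Fin d)))
    (f f₀ q : EuclideanSpace ℝ (Fin d) → ℝ) (M : ℝ) (hM : 0 < M)
    (hf : ∀ x ∈ C', ∀ y ∈ C', |f x - f y| ≤ M * ‖x - y‖)
    (hf₀ : ∀ x ∈ C', ∀ y ∈ C', |f₀ x - f₀ y| ≤ M * ‖x - y‖)
    (qmin : ℝ) (hqmin : 0 < qmin) (hq : ∀ x ∈ C', qmin ≤ q x)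
    (xstar : EuclideanSpace ℝ (Fin d)) (hxstar : xstar ∈ C')
    (ε : ℝ) (hε : 0 < ε) (hbig : ε ≤ |f xstar - f₀ xstar|)
    (r : ℝ) (hr : r ≤ ε / (4 * M)) (hball : Metric.closedBall xstar r ⊆ C') :
    ENNReal.ofReal (ε ^ 2 / 4 * qmin) * volume (Metric.closedBall xstar r)
      ≤ ∫⁻ x in C', ENNReal.ofReal ((f x - f₀ x) ^ 2 * q x) := by
  calc ENNReal.ofReal (ε ^ 2 / 4 * qmin) * volume (Metric.closedBall xstar r)
      = ∫⁻ _ in Metric.closedBall xstar r, ENNReal.ofReal (ε ^ 2 / 4 * qmin) := by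
        rw [setLIntegral_const]
    _ ≤ ∫⁻ x in Metric.closedBall xstar r, ENNReal.ofReal ((f x - f₀ x) ^ 2 * q x) := by
        apply lintegral_mono_ae
        filter_upwards [ae_restrict_mem measurableSet_closedBall] with x hx
        apply ENNReal.ofReal_le_ofReal
        have hxC : x ∈ C' := hball hx
        have hdist : ‖x - xstar‖ ≤ r := by
          rw [← dist_eq_norm]; exact hx
        have h1 : |f x - f xstar| ≤ M * r :=
          le_trans (hf x hxC xstar hxstar) (by nlinarith)
        have h2 : |f₀ x - f₀ xstar| ≤ M * r :=
          le_trans (hf₀ x hxC xstar hxstar) (by nlinarith)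
        have hMr : M * r ≤ ε / 4 := by
          calc M * r ≤ M * (ε / (4 * M)) := by nlinarith
            _ = ε / 4 := by field_simp
        have key : ε / 2 ≤ |f x - f₀ x| := by
          have htri : |f xstar - f₀ xstar| ≤
              |f x - f₀ x| + |f x - f xstar| + |f₀ x - f₀ xstar| := by
            have := abs_sub (f xstar - f₀ xstar) (f x - f₀ x)
            cases abs_cases (f xstar - f₀ xstar) with
            | inl h => cases abs_cases (f x - f₀ x) with
              | inl h' =>
                  cases abs_cases (f x - f xstar) with
                  | inl h'' => cases abs_cases (f₀ x - f₀ xstar) with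
                    | inl h3 => linarith [h.1, h'.1, h''.1, h3.1]
                    | inr h3 => linarith [h.1, h'.1, h''.1, h3.1]
                  | inr h'' => cases abs_cases (f₀ x - f₀ xstar) with
                    | inl h3 => linarith [h.1, h'.1, h''.1, h3.1]
                    | inr h3 => linarith [h.1, h'.1, h''.1, h3.1]
              | inr h' =>
                  cases abs_cases (f x - f xstar) with
                  | inl h'' => cases abs_cases (f₀ x - f₀ xstar) with
                    | inl h3 => linarith [h.1, h'.1, h''.1, h3.1]
                    | inr h3 => linarith [h.1, h'.1, h''.1, h3.1]
                  | inr h'' => cases abs_cases (f₀ x - f₀ xstar) with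
                    | inl h3 => linarith [h.1, h'.1, h''.1, h3.1]
                    | inr h3 => linarith [h.1, h'.1, h''.1, h3.1]
            | inr h => cases abs_cases (f x - f₀ x) with
              | inl h' =>
                  cases abs_cases (f x - f xstar) with
                  | inl h'' => cases abs_cases (f₀ x - f₀ xstar) with
                    | inl h3 => linarith [h.1, h'.1, h''.1, h3.1]
                    | inr h3 => linarith [h.1, h'.1, h''.1, h3.1]
                  | inr h'' => cases abs_cases (f₀ x - f₀ xstar) with
                    | inl h3 => linarith [h.1, h'.1, h''.1, h3.1]
                    | inr h3 => linarith [h.1, h'.1, h''.1, h3.1]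
              | inr h' =>
                  cases abs_cases (f x - f xstar) with
                  | inl h'' => cases abs_cases (f₀ x - f₀ xstar) with
                    | inl h3 => linarith [h.1, h'.1, h''.1, h3.1]
                    | inr h3 => linarith [h.1, h'.1, h''.1, h3.1]
                  | inr h'' => cases abs_cases (f₀ x - f₀ xstar) with
                    | inl h3 => linarith [h.1, h'.1, h''.1, h3.1]
                    | inr h3 => linarith [h.1, h'.1, h''.1, h3.1]
          linarith
        have hsq : ε ^ 2 / 4 ≤ (f x - f₀ x) ^ 2 := by
          have := sq_abs (f x - f₀ x)
          nlinarith [key, hε.le]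
        nlinarith [hq x hxC, hsq, hqmin.le, sq_nonneg (f x - f₀ x)]
    _ ≤ ∫⁻ x in C', ENNReal.ofReal ((f x - f₀ x) ^ 2 * q x) :=
        lintegral_mono_set hball
end

section
/- Let X₁, …, X_n ∈ ℝ^d be pairwise distinct, let y₁, …, y_n ∈ ℝ, and let K : ℝ^d → ℝ vanish outside the closed Euclidean ball of radius R > 0 centered at the origin. Set h₀ = min_{i ≠ j} ‖X_i − X_j‖ / R. Then for every h with 0 < h < h₀ and every choice of (a_i, b_i) ∈ ℝ × ℝ^d for i = 1,…,n, one has Σ_{i=1}^n Σ_{j=1}^n ( y_j − a_i − ⟨b_i, X_j − X_i⟩ )² K((X_j − X_i)/h) = K(0) · Σ_{i=1}^n ( y_i − a_i )². Consequently, if K(0) > 0, then for any constraint set S ⊆ (ℝ × ℝ^d)^n, a point (a, b) ∈ S minimizes the left-hand side over S if and only if its component a minimizes Σ_{i=1}^n (y_i − a_i)² over the projection { a' : ∃ b', (a', b') ∈ S }. -/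
open scoped RealInnerProductSpace

/-- The SCKLS objective with evaluation points equal to the (distinct) data points. -/
noncomputable def scklsObjective {d n : ℕ} (X : Fin n → EuclideanSpace ℝ (Fin d))
    (y : Fin n → ℝ) (K : EuclideanSpace ℝ (Fin d) → ℝ) (h : ℝ)
    (a : Fin n → ℝ) (b : Fin n → EuclideanSpace ℝ (Fin d)) : ℝ :=
  ∑ i, ∑ j, (y j - a i - ⟪b i, X j - X i⟫) ^ 2 * K (h⁻¹ • (X j - X i))

/-- Proposition A.1: for evaluation points equal to the sample points and bandwidth
below the minimal pairwise distance over R, the SCKLS objective collapses to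
K(0) times the CNLS least-squares objective, and (if K(0) > 0) constrained minimizers
of the SCKLS objective are exactly those whose intercept component minimizes the CNLS
objective over the projected constraint set. -/
theorem sckls_equals_cnls_small_bandwidth
    {d n : ℕ} (X : Fin n → EuclideanSpace ℝ (Fin d)) (hX : Function.Injective X)
    (y : Fin n → ℝ) (K : EuclideanSpace ℝ (Fin d) → ℝ) (R : ℝ) (hR : 0 < R)
    (hK : ∀ u, R < ‖u‖ → K u = 0)
    (h : ℝ) (hh : 0 < h)
    (hh0 : h < ⨅ p : {p : Fin n × Fin n // p.1 ≠ p.2}, ‖X p.1.1 - X p.1.2‖ / R) :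
    (∀ (a : Fin n → ℝ) (b : Fin n → EuclideanSpace ℝ (Fin d)),
      scklsObjective X y K h a b = K 0 * ∑ i, (y i - a i) ^ 2) ∧
    (0 < K 0 →
      ∀ (S : Set (Fin n → ℝ × EuclideanSpace ℝ (Fin d)))
        (c : Fin n → ℝ × EuclideanSpace ℝ (Fin d)), c ∈ S →
        ((∀ c' ∈ S,
            scklsObjective X y K h (fun i => (c i).1) (fun i => (c i).2)
              ≤ scklsObjective X y K h (fun i => (c' i).1) (fun i => (c' i).2)) ↔
          (∀ a' : Fin n → ℝ, (∃ b' : Fin n → EuclideanSpace ℝ (Fin d), (fun i => (a' i, b' i)) ∈ S) →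
            ∑ i, (y i - (c i).1) ^ 2 ≤ ∑ i, (y i - a' i) ^ 2))) := by
  have key : ∀ (a : Fin n → ℝ) (b : Fin n → EuclideanSpace ℝ (Fin d)),
      scklsObjective X y K h a b = K 0 * ∑ i, (y i - a i) ^ 2 := by
    intro a b
    unfold scklsObjective
    have hzero : ∀ i j : Fin n, i ≠ j → K (h⁻¹ • (X j - X i)) = 0 := by
      intro i j hij
      apply hK
      have hle : (⨅ p : {p : Fin n × Fin n // p.1 ≠ p.2}, ‖X p.1.1 - X p.1.2‖ / R)
          ≤ ‖X j - X i‖ / R := by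
        have : BddBelow (Set.range fun p : {p : Fin n × Fin n // p.1 ≠ p.2} =>
            ‖X p.1.1 - X p.1.2‖ / R) := by
          refine ⟨0, ?_⟩
          rintro x ⟨p, rfl⟩
          positivity
        exact ciInf_le this ⟨(j, i), hij.symm⟩
      have hlt : h < ‖X j - X i‖ / R := lt_of_lt_of_le hh0 hle
      have hRh : R * h < ‖X j - X i‖ := by
        rw [lt_div_iff₀ hR] at hlt
        linarith
      rw [norm_smul]
      have : ‖h⁻¹‖ = h⁻¹ := by
        rw [Real.norm_eq_abs, abs_of_pos (by positivity)]
      rw [this, lt_inv_mul_iff₀ hh]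
      linarith
    calc ∑ i, ∑ j, (y j - a i - ⟪b i, X j - X i⟫) ^ 2 * K (h⁻¹ • (X j - X i))
        = ∑ i : Fin n, (y i - a i) ^ 2 * K 0 := by
          refine Finset.sum_congr rfl fun i _ => ?_
          rw [Finset.sum_eq_single i]
          · simp
          · intro j _ hji
            rw [hzero i j (Ne.symm hji), mul_zero]
          · intro hi; exact absurd (Finset.mem_univ i) hi
      _ = K 0 * ∑ i, (y i - a i) ^ 2 := by rw [Finset.mul_sum]; congr 1; ext i; ring
  refine ⟨key, fun hK0 S c hc => ?_⟩
  constructor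
  · intro hmin a' ⟨b', hb'⟩
    have := hmin _ hb'
    rw [key, key] at this
    simpa using (mul_le_mul_iff_right₀ hK0).mp this
  · intro hmin c' hc'
    rw [key, key]
    apply (mul_le_mul_iff_right₀ hK0).mpr
    exact hmin (fun i => (c' i).1) ⟨fun i => (c' i).2, by simpa using hc'⟩
end
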